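/- arXiv:2101.08644 — 2 statements merged into one kernel-verified Lean document; each statement's English description precedes it below -/
import Mathlib

section
/- Let n, k be positive integers with 1 ≤ k ≤ n/2 and gcd(n,k) > 1. Then every irredundant base for the action of S_n on the set Ω_k of k-subsets of {1,…,n} has length at most n − 2, i.e. I(S_n, Ω_k) ≤ n − 2. -/
open Pointwise

/-- The pointwise stabilizer, inside the permutation group `H ≤ Sym(Fin n)`, of the first
`i` sets of the sequence `f`. -/
def chainStab {n e : ℕ} (H : Subgroup (Equiv.Perm (Fin n))) (f : Fin e → Finset (Fin n))
    (i : ℕ) : Subgroup (Equiv.Perm (Fin n)) :=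
  H ⊓ ⨅ j : Fin e, ⨅ _ : (j : ℕ) < i, MulAction.stabilizer (Equiv.Perm (Fin n)) (f j)

namespace IrredAux

variable {n ℓ : ℕ}

lemma smul_finset_eq_iff (σ : Equiv.Perm (Fin n)) (s : Finset (Fin n)) :
    σ • s = s ↔ ∀ x, σ x ∈ s ↔ x ∈ s := by
  constructor
  · intro h x
    have := Finset.smul_mem_smul_finset_iff (s := s) (b := x) σ
    rw [h] at this
    simpa [Equiv.Perm.smul_def] using this
  · intro h
    ext y
    simp only [Finset.mem_smul_finset, Equiv.Perm.smul_def]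
    constructor
    · rintro ⟨x, hx, rfl⟩; exact (h x).2 hx
    · intro hy
      exact ⟨σ⁻¹ y, by have := h (σ⁻¹ y); simp at this; rw [Equiv.Perm.inv_def]; rwa [← this], by simp⟩

def cf (f : Fin ℓ → Finset (Fin n)) (i : ℕ) (x : Fin n) : Finset (Fin ℓ) :=
  Finset.univ.filter (fun j : Fin ℓ => (j : ℕ) < i ∧ x ∈ f j)

lemma mem_cf {f : Fin ℓ → Finset (Fin n)} {i : ℕ} {x : Fin n} {j : Fin ℓ} :
    j ∈ cf f i x ↔ (j : ℕ) < i ∧ x ∈ f j := by simp [cf]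

lemma cf_eq_iff {f : Fin ℓ → Finset (Fin n)} {i : ℕ} {x y : Fin n} :
    cf f i x = cf f i y ↔ ∀ j : Fin ℓ, (j : ℕ) < i → (x ∈ f j ↔ y ∈ f j) := by
  constructor
  · intro h j hj
    constructor
    · intro hx
      have : j ∈ cf f i x := mem_cf.2 ⟨hj, hx⟩
      rw [h] at this; exact (mem_cf.1 this).2
    · intro hy
      have : j ∈ cf f i y := mem_cf.2 ⟨hj, hy⟩
      rw [← h] at this; exact (mem_cf.1 this).2
  · intro h
    ext j
    simp only [mem_cf]
    exact ⟨fun ⟨hj, hx⟩ => ⟨hj, (h j hj).1 hx⟩, fun ⟨hj, hy⟩ => ⟨hj, (h j hj).2 hy⟩⟩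

lemma mem_chainStab {f : Fin ℓ → Finset (Fin n)} {i : ℕ} {σ : Equiv.Perm (Fin n)} :
    σ ∈ chainStab (⊤ : Subgroup (Equiv.Perm (Fin n))) f i ↔
      ∀ x, cf f i (σ x) = cf f i x := by
  unfold chainStab
  simp only [Subgroup.mem_inf, Subgroup.mem_top, true_and, Subgroup.mem_iInf,
    MulAction.mem_stabilizer_iff]
  constructor
  · intro h x
    rw [cf_eq_iff]
    intro j hj
    exact ((smul_finset_eq_iff σ (f j)).1 (h j hj)) x
  · intro h j hj
    rw [smul_finset_eq_iff]
    intro x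
    exact (cf_eq_iff.1 (h x)) j hj

def mImg (f : Fin ℓ → Finset (Fin n)) (i : ℕ) : ℕ :=
  ((Finset.univ : Finset (Fin n)).image (cf f i)).card

lemma mImg_zero (f : Fin ℓ → Finset (Fin n)) (hn : 0 < n) : mImg f 0 = 1 := by
  have h : (Finset.univ : Finset (Fin n)).image (cf f 0) = {∅} := by
    ext v
    simp only [Finset.mem_image, Finset.mem_singleton]
    constructor
    · rintro ⟨x, -, rfl⟩; ext j; simp [mem_cf]
    · rintro rfl
      exact ⟨⟨0, hn⟩, Finset.mem_univ _, by ext j; simp [mem_cf]⟩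
  rw [mImg, h, Finset.card_singleton]

lemma cf_filter (f : Fin ℓ → Finset (Fin n)) (i : ℕ) (x : Fin n) :
    cf f i x = (cf f (i + 1) x).filter (fun j : Fin ℓ => (j : ℕ) < i) := by
  ext j
  simp only [Finset.mem_filter, mem_cf]
  constructor
  · rintro ⟨hj, hx⟩; exact ⟨⟨Nat.lt_succ_of_lt hj, hx⟩, hj⟩
  · rintro ⟨⟨-, hx⟩, hj⟩; exact ⟨hj, hx⟩

lemma image_cf_eq (f : Fin ℓ → Finset (Fin n)) (i : ℕ) :
    (Finset.univ : Finset (Fin n)).image (cf f i) =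
      ((Finset.univ : Finset (Fin n)).image (cf f (i + 1))).image
        (fun w => w.filter (fun j : Fin ℓ => (j : ℕ) < i)) := by
  rw [Finset.image_image]
  apply Finset.image_congr
  intro x _
  exact (cf_filter f i x)

lemma mImg_mono (f : Fin ℓ → Finset (Fin n)) (i : ℕ) : mImg f i ≤ mImg f (i + 1) := by
  rw [mImg, image_cf_eq f i]
  exact Finset.card_image_le

lemma mImg_lt (f : Fin ℓ → Finset (Fin n)) {i : ℕ}
    (hstrict : chainStab (⊤ : Subgroup (Equiv.Perm (Fin n))) f (i + 1) < chainStab ⊤ f i) :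
    mImg f i < mImg f (i + 1) := by
  by_contra hcon
  push_neg at hcon
  have heq : mImg f i = mImg f (i + 1) := le_antisymm (mImg_mono f i) hcon
  have hinj : Set.InjOn (fun w : Finset (Fin ℓ) => w.filter (fun j : Fin ℓ => (j : ℕ) < i))
      ((Finset.univ : Finset (Fin n)).image (cf f (i + 1)) : Set (Finset (Fin ℓ))) := by
    rw [← Finset.card_image_iff, ← image_cf_eq f i]
    exact heq
  have himp : ∀ x y : Fin n, cf f i x = cf f i y → cf f (i + 1) x = cf f (i + 1) y := by
    intro x y hxy
    apply hinj (Finset.mem_coe.2 (Finset.mem_image_of_mem _ (Finset.mem_univ x)))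
      (Finset.mem_coe.2 (Finset.mem_image_of_mem _ (Finset.mem_univ y)))
    simpa only [← cf_filter] using hxy
  have hle : chainStab (⊤ : Subgroup (Equiv.Perm (Fin n))) f i ≤ chainStab ⊤ f (i + 1) := by
    intro σ hσ
    rw [mem_chainStab] at hσ ⊢
    exact fun x => himp _ _ (hσ x)
  exact absurd (hstrict.trans_le hle) (lt_irrefl _)

lemma cf_inj_of_bot (f : Fin ℓ → Finset (Fin n))
    (hbot : chainStab (⊤ : Subgroup (Equiv.Perm (Fin n))) f ℓ = ⊥) :
    Function.Injective (cf f ℓ) := by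
  intro x y hxy
  by_contra hne
  have hmem : Equiv.swap x y ∈ chainStab (⊤ : Subgroup (Equiv.Perm (Fin n))) f ℓ := by
    rw [mem_chainStab]
    intro z
    rcases eq_or_ne z x with rfl | hzx
    · rw [Equiv.swap_apply_left]; exact hxy.symm
    rcases eq_or_ne z y with rfl | hzy
    · rw [Equiv.swap_apply_right]; exact hxy
    · rw [Equiv.swap_apply_of_ne_of_ne hzx hzy]
  rw [hbot, Subgroup.mem_bot] at hmem
  have := congrArg (fun σ : Equiv.Perm (Fin n) => σ x) hmem
  simp only [Equiv.swap_apply_left, Equiv.Perm.coe_one, id_eq] at this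
  exact hne this.symm

lemma mImg_top (f : Fin ℓ → Finset (Fin n))
    (hbot : chainStab (⊤ : Subgroup (Equiv.Perm (Fin n))) f ℓ = ⊥) :
    mImg f ℓ = n := by
  rw [mImg, Finset.card_image_of_injective _ (cf_inj_of_bot f hbot)]
  simp

lemma cf_succ_eq_iff (f : Fin ℓ → Finset (Fin n)) {i : ℕ} (hi : i < ℓ) (x y : Fin n) :
    cf f (i + 1) x = cf f (i + 1) y ↔
      (cf f i x = cf f i y ∧ (x ∈ f ⟨i, hi⟩ ↔ y ∈ f ⟨i, hi⟩)) := by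
  rw [cf_eq_iff, cf_eq_iff]
  constructor
  · intro h
    refine ⟨fun j hj => h j (Nat.lt_succ_of_lt hj), h ⟨i, hi⟩ (Nat.lt_succ_self i)⟩
  · rintro ⟨h1, h2⟩ j hj
    rcases Nat.lt_succ_iff_lt_or_eq.1 hj with hj' | hj'
    · exact h1 j hj'
    · have : j = ⟨i, hi⟩ := Fin.ext hj'
      rw [this]; exact h2

def fibv (f : Fin ℓ → Finset (Fin n)) (i : ℕ) (v : Finset (Fin ℓ)) : Finset (Fin n) :=
  Finset.univ.filter (fun y => cf f i y = v)

lemma mem_fibv_self (f : Fin ℓ → Finset (Fin n)) (i : ℕ) (x : Fin n) :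
    x ∈ fibv f i (cf f i x) := by simp [fibv]

lemma fibv_succ (f : Fin ℓ → Finset (Fin n)) {i : ℕ} (hi : i < ℓ) (x : Fin n) :
    fibv f (i + 1) (cf f (i + 1) x) =
      if x ∈ f ⟨i, hi⟩ then fibv f i (cf f i x) ∩ f ⟨i, hi⟩
      else fibv f i (cf f i x) \ f ⟨i, hi⟩ := by
  ext y
  by_cases hx : x ∈ f ⟨i, hi⟩ <;>
    simp only [hx, if_true, if_false, fibv, Finset.mem_filter, Finset.mem_univ, true_and,
      Finset.mem_inter, Finset.mem_sdiff, cf_succ_eq_iff f hi] <;> tauto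

lemma cf_succ (f : Fin ℓ → Finset (Fin n)) {i : ℕ} (hi : i < ℓ) (x : Fin n) :
    cf f (i + 1) x =
      if x ∈ f ⟨i, hi⟩ then insert ⟨i, hi⟩ (cf f i x) else cf f i x := by
  ext j
  by_cases hx : x ∈ f ⟨i, hi⟩ <;>
    simp only [hx, if_true, if_false, Finset.mem_insert, mem_cf]
  · constructor
    · rintro ⟨hj, hxj⟩
      rcases Nat.lt_succ_iff_lt_or_eq.1 hj with hj' | hj'
      · exact Or.inr ⟨hj', hxj⟩
      · exact Or.inl (Fin.ext hj')
    · rintro (rfl | ⟨hj, hxj⟩)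
      · exact ⟨Nat.lt_succ_self i, hx⟩
      · exact ⟨Nat.lt_succ_of_lt hj, hxj⟩
  · constructor
    · rintro ⟨hj, hxj⟩
      rcases Nat.lt_succ_iff_lt_or_eq.1 hj with hj' | hj'
      · exact ⟨hj', hxj⟩
      · have hji : j = ⟨i, hi⟩ := Fin.ext hj'
        rw [hji] at hxj
        exact absurd hxj hx
    · rintro ⟨hj, hxj⟩
      exact ⟨Nat.lt_succ_of_lt hj, hxj⟩

lemma step_dvd (f : Fin ℓ → Finset (Fin n)) {i : ℕ} (hi : i < ℓ) {d k : ℕ}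
    (hcard : (f ⟨i, hi⟩).card = k) (hdk : d ∣ k)
    (hm : mImg f (i + 1) = mImg f i + 1)
    (IH : ∀ x, d ∣ (fibv f i (cf f i x)).card) :
    ∀ x, d ∣ (fibv f (i + 1) (cf f (i + 1) x)).card := by
  classical
  set F : Finset (Fin n) := f ⟨i, hi⟩ with hF
  set I : Finset (Finset (Fin ℓ)) := (Finset.univ : Finset (Fin n)).image (cf f i) with hI
  set e : Fin n → Finset (Fin ℓ) × Bool := fun x => (cf f i x, decide (x ∈ F)) with he
  set split : Finset (Fin ℓ) → Prop := fun v => (fibv f i v ∩ F).Nonempty ∧ (fibv f i v \ F).Nonempty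
    with hsplit
  -- (a) card of image of e equals mImg f (i+1)
  have hE : ((Finset.univ : Finset (Fin n)).image e).card = mImg f (i + 1) := by
    apply le_antisymm
    · have : (Finset.univ : Finset (Fin n)).image e =
          ((Finset.univ : Finset (Fin n)).image (cf f (i + 1))).image
            (fun w => (w.filter (fun j : Fin ℓ => (j : ℕ) < i), decide ((⟨i, hi⟩ : Fin ℓ) ∈ w))) := by
        rw [Finset.image_image]
        apply Finset.image_congr
        intro x _
        simp only [Function.comp_apply, he]
        refine Prod.ext ?_ ?_
        · exact (cf_filter f i x)
        · simp only [decide_eq_decide, mem_cf]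
          constructor
          · intro h; exact ⟨Nat.lt_succ_self i, h⟩
          · rintro ⟨-, h⟩; exact h
      rw [this]
      exact Finset.card_image_le
    · have : (Finset.univ : Finset (Fin n)).image (cf f (i + 1)) =
          ((Finset.univ : Finset (Fin n)).image e).image
            (fun p => if p.2 then insert (⟨i, hi⟩ : Fin ℓ) p.1 else p.1) := by
        rw [Finset.image_image]
        apply Finset.image_congr
        intro x _
        simp only [Function.comp_apply, he]
        rw [cf_succ f hi x]
        by_cases hx : x ∈ F <;> simp [hx, ← hF]
      rw [mImg, this]
      exact Finset.card_image_le
  -- counting lower bound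
  have hfib : ((Finset.univ : Finset (Fin n)).image e).card =
      ∑ v ∈ I, (((Finset.univ : Finset (Fin n)).image e).filter (fun p => p.1 = v)).card := by
    apply Finset.card_eq_sum_card_fiberwise (f := Prod.fst)
    intro p hp
    rcases Finset.mem_image.1 hp with ⟨x, -, rfl⟩
    exact Finset.mem_image_of_mem _ (Finset.mem_univ x)
  have hterm : ∀ v ∈ I, 1 + (if split v then 1 else 0) ≤
      (((Finset.univ : Finset (Fin n)).image e).filter (fun p => p.1 = v)).card := by
    intro v hv
    rcases Finset.mem_image.1 hv with ⟨x, -, rfl⟩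
    by_cases hs : split (cf f i x)
    · obtain ⟨⟨a, ha⟩, ⟨b, hb⟩⟩ := id hs
      simp only [Finset.mem_inter, fibv, Finset.mem_filter, Finset.mem_univ, true_and] at ha
      simp only [Finset.mem_sdiff, fibv, Finset.mem_filter, Finset.mem_univ, true_and] at hb
      have hsub : ({(cf f i x, true), (cf f i x, false)} : Finset (Finset (Fin ℓ) × Bool)) ⊆
          ((Finset.univ : Finset (Fin n)).image e).filter (fun p => p.1 = cf f i x) := by
        intro p hp
        simp only [Finset.mem_insert, Finset.mem_singleton] at hp
        rcases hp with rfl | rfl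
        · refine Finset.mem_filter.2 ⟨Finset.mem_image.2 ⟨a, Finset.mem_univ a, ?_⟩, rfl⟩
          simp [he, ha.1, ha.2]
        · refine Finset.mem_filter.2 ⟨Finset.mem_image.2 ⟨b, Finset.mem_univ b, ?_⟩, rfl⟩
          simp [he, hb.1, hb.2]
      have h2 : ({(cf f i x, true), (cf f i x, false)} : Finset (Finset (Fin ℓ) × Bool)).card = 2 :=
        Finset.card_pair (by simp)
      rw [if_pos hs]
      calc 1 + 1 = 2 := rfl
        _ = _ := h2.symm
        _ ≤ _ := Finset.card_le_card hsub
    · rw [if_neg hs, Nat.add_zero]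
      refine Finset.card_pos.2 ⟨e x, Finset.mem_filter.2 ⟨Finset.mem_image_of_mem _ (Finset.mem_univ x), rfl⟩⟩
  have hlow : I.card + (I.filter split).card ≤ mImg f (i + 1) := by
    rw [← hE, hfib]
    calc I.card + (I.filter split).card
        = ∑ v ∈ I, (1 + (if split v then 1 else 0)) := by
          rw [Finset.sum_add_distrib, Finset.sum_const, smul_eq_mul, mul_one,
            Finset.card_filter]
      _ ≤ _ := Finset.sum_le_sum hterm
  have hIc : I.card = mImg f i := rfl
  have hS1 : (I.filter split).card ≤ 1 := by
    rw [hm] at hlow; omega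
  have hSne : (I.filter split).Nonempty := by
    by_contra hS
    rw [Finset.not_nonempty_iff_eq_empty] at hS
    have hnos : ∀ v ∈ I, ¬ split v := by
      intro v hv hsv
      exact absurd (Finset.mem_filter.2 ⟨hv, hsv⟩) (by rw [hS]; exact Finset.notMem_empty _)
    have himgeq : (Finset.univ : Finset (Fin n)).image e =
        I.image (fun v => (v, decide ((fibv f i v ∩ F).Nonempty))) := by
      rw [hI, Finset.image_image]
      apply Finset.image_congr
      intro x _
      simp only [Function.comp_apply, he]
      refine Prod.ext rfl ?_
      simp only [decide_eq_decide]
      constructor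
      · intro hx; exact ⟨x, Finset.mem_inter.2 ⟨mem_fibv_self f i x, hx⟩⟩
      · intro hne2
        by_contra hx
        exact hnos (cf f i x) (Finset.mem_image_of_mem _ (Finset.mem_univ x))
          ⟨hne2, ⟨x, Finset.mem_sdiff.2 ⟨mem_fibv_self f i x, hx⟩⟩⟩
    have hle2 : mImg f (i + 1) ≤ I.card := by
      rw [← hE, himgeq]; exact Finset.card_image_le
    rw [hm] at hle2
    omega
  have hScard : (I.filter split).card = 1 :=
    le_antisymm hS1 (Finset.card_pos.2 hSne)
  obtain ⟨v0, hv0eq⟩ := Finset.card_eq_one.1 hScard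
  have hv0mem : v0 ∈ I.filter split := by
    rw [hv0eq]; exact Finset.mem_singleton_self _
  have hv0I : v0 ∈ I := (Finset.mem_filter.1 hv0mem).1
  have hv0split : split v0 := (Finset.mem_filter.1 hv0mem).2
  have hnotsplit : ∀ v ∈ I, v ≠ v0 → ¬ split v := by
    intro v hv hne hsv
    have hvm : v ∈ I.filter split := Finset.mem_filter.2 ⟨hv, hsv⟩
    rw [hv0eq] at hvm
    exact hne (Finset.mem_singleton.1 hvm)
  have hinterv : ∀ v ∈ I, v ≠ v0 → d ∣ (fibv f i v ∩ F).card := by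
    intro v hv hne
    have hns := hnotsplit v hv hne
    by_cases hA : (fibv f i v ∩ F).Nonempty
    · have hB : ¬ (fibv f i v \ F).Nonempty := fun hB => hns ⟨hA, hB⟩
      rw [Finset.not_nonempty_iff_eq_empty, Finset.sdiff_eq_empty_iff_subset] at hB
      rw [Finset.inter_eq_left.2 hB]
      rcases Finset.mem_image.1 hv with ⟨x, -, rfl⟩
      exact IH x
    · rw [Finset.not_nonempty_iff_eq_empty] at hA
      rw [hA]
      simp
  have hdv0F : d ∣ (fibv f i v0 ∩ F).card := by
    have hksum : F.card = ∑ v ∈ I, (F.filter (fun y => cf f i y = v)).card :=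
      Finset.card_eq_sum_card_fiberwise (fun x _ => Finset.mem_image_of_mem _ (Finset.mem_univ x))
    have hFfilter : ∀ v : Finset (Fin ℓ), F.filter (fun y => cf f i y = v) = fibv f i v ∩ F := by
      intro v
      ext y
      simp only [Finset.mem_filter, Finset.mem_inter, fibv, Finset.mem_univ, true_and]
      tauto
    have hsum2 : k = (fibv f i v0 ∩ F).card + ∑ v ∈ I.erase v0, (fibv f i v ∩ F).card := by
      rw [← hcard, hksum]
      simp_rw [hFfilter]
      exact (Finset.add_sum_erase I _ hv0I).symm
    have hrest : d ∣ ∑ v ∈ I.erase v0, (fibv f i v ∩ F).card :=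
      Finset.dvd_sum (fun v hv => hinterv v (Finset.mem_of_mem_erase hv) (Finset.ne_of_mem_erase hv))
    have heq0 : (fibv f i v0 ∩ F).card = k - ∑ v ∈ I.erase v0, (fibv f i v ∩ F).card := by omega
    rw [heq0]
    exact Nat.dvd_sub hdk hrest
  have hdv0sd : d ∣ (fibv f i v0 \ F).card := by
    have hc := Finset.card_inter_add_card_sdiff (fibv f i v0) F
    have hfull : d ∣ (fibv f i v0).card := by
      rcases Finset.mem_image.1 hv0I with ⟨x0, -, rfl⟩
      exact IH x0
    have heq1 : (fibv f i v0 \ F).card = (fibv f i v0).card - (fibv f i v0 ∩ F).card := by omega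
    rw [heq1]
    exact Nat.dvd_sub hfull hdv0F
  intro x
  rw [fibv_succ f hi x]
  by_cases hx : x ∈ F
  · rw [if_pos hx]
    by_cases hvx : cf f i x = v0
    · rw [hvx]; exact hdv0F
    · have hns := hnotsplit _ (Finset.mem_image_of_mem _ (Finset.mem_univ x)) hvx
      have hA : (fibv f i (cf f i x) ∩ F).Nonempty :=
        ⟨x, Finset.mem_inter.2 ⟨mem_fibv_self f i x, hx⟩⟩
      have hB : ¬ (fibv f i (cf f i x) \ F).Nonempty := fun hB => hns ⟨hA, hB⟩
      rw [Finset.not_nonempty_iff_eq_empty, Finset.sdiff_eq_empty_iff_subset] at hB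
      rw [Finset.inter_eq_left.2 hB]
      exact IH x
  · rw [if_neg hx]
    by_cases hvx : cf f i x = v0
    · rw [hvx]; exact hdv0sd
    · have hns := hnotsplit _ (Finset.mem_image_of_mem _ (Finset.mem_univ x)) hvx
      have hB : (fibv f i (cf f i x) \ F).Nonempty :=
        ⟨x, Finset.mem_sdiff.2 ⟨mem_fibv_self f i x, hx⟩⟩
      have hA : ¬ (fibv f i (cf f i x) ∩ F).Nonempty := fun hA => hns ⟨hA, hB⟩
      rw [Finset.not_nonempty_iff_eq_empty] at hA
      have hsd : fibv f i (cf f i x) \ F = fibv f i (cf f i x) := by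
        rw [Finset.sdiff_eq_self_iff_disjoint, Finset.disjoint_iff_inter_eq_empty]
        exact hA
      rw [hsd]
      exact IH x

lemma cf_zero (f : Fin ℓ → Finset (Fin n)) (x : Fin n) : cf f 0 x = ∅ := by
  ext j; simp [mem_cf]

end IrredAux

open IrredAux

/-- If `1 ≤ k ≤ n/2` and `gcd(n,k) > 1`, then every irredundant base for the action of
`Sₙ` on `k`-subsets of `{1,…,n}` has length at most `n - 2`. -/
theorem irredundant_base_le_of_not_coprime {n k : ℕ} (hk : 1 ≤ k) (hkn : 2 * k ≤ n)
    (hg : 1 < Nat.gcd n k) :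
    ∀ (ℓ : ℕ) (f : Fin ℓ → Finset (Fin n)),
      (∀ i, (f i).card = k) →
      (∀ i < ℓ, chainStab (⊤ : Subgroup (Equiv.Perm (Fin n))) f (i + 1) <
        chainStab ⊤ f i) →
      chainStab (⊤ : Subgroup (Equiv.Perm (Fin n))) f ℓ = ⊥ →
      ℓ ≤ n - 2 := by
  intro ℓ f hcard hstrict hbot
  by_contra hcon
  push_neg at hcon
  have hn2 : 2 ≤ n := le_trans (by omega) hkn
  have hgrow : ∀ i j : ℕ, i + j ≤ ℓ → mImg f i + j ≤ mImg f (i + j) := by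
    intro i j
    induction j with
    | zero => simp
    | succ j ih =>
      intro h
      have h1 := ih (by omega)
      have h2 := mImg_lt f (hstrict (i + j) (by omega))
      have h3 : i + (j + 1) = (i + j) + 1 := by omega
      rw [h3]
      omega
  have hm0 : mImg f 0 = 1 := mImg_zero f (by omega)
  have hmtop : mImg f ℓ = n := mImg_top f hbot
  have hlb : ∀ i ≤ ℓ, i + 1 ≤ mImg f i := by
    intro i hi
    have := hgrow 0 i (by omega)
    rw [Nat.zero_add] at this
    omega
  have hℓ : ℓ = n - 1 := by
    have := hlb ℓ le_rfl
    omega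
  have hub : ∀ i ≤ ℓ, mImg f i ≤ i + 1 := by
    intro i hi
    have := hgrow i (ℓ - i) (by omega)
    rw [show i + (ℓ - i) = ℓ from by omega] at this
    omega
  have hdn : Nat.gcd n k ∣ n := Nat.gcd_dvd_left n k
  have hdk : Nat.gcd n k ∣ k := Nat.gcd_dvd_right n k
  have hdiv : ∀ i ≤ ℓ, ∀ x, Nat.gcd n k ∣ (fibv f i (cf f i x)).card := by
    intro i
    induction i with
    | zero =>
      intro _ x
      have hfe : fibv f 0 (cf f 0 x) = Finset.univ := by
        ext y
        simp [fibv, cf_zero]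
      rw [hfe]
      simpa using hdn
    | succ i ih =>
      intro hi x
      have hstep : i < ℓ := by omega
      have hm : mImg f (i + 1) = mImg f i + 1 := by
        have h1 := hlb i (by omega)
        have h2 := hub i (by omega)
        have h3 := hlb (i + 1) hi
        have h4 := hub (i + 1) hi
        omega
      exact step_dvd f hstep (hcard ⟨i, hstep⟩) hdk hm (ih (by omega)) x
  have hinj := cf_inj_of_bot f hbot
  have hx0 : (0 : ℕ) < n := by omega
  set x : Fin n := ⟨0, hx0⟩
  have hsingle : fibv f ℓ (cf f ℓ x) = {x} := by
    ext y
    simp only [fibv, Finset.mem_filter, Finset.mem_univ, true_and, Finset.mem_singleton]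
    exact ⟨fun h => hinj h, fun h => by rw [h]⟩
  have := hdiv ℓ le_rfl x
  rw [hsingle, Finset.card_singleton] at this
  have h1 := Nat.le_of_dvd one_pos this
  omega
end

section
/- Let n ≥ 2 and let Δ be a set of subsets of {1,…,n} that is independent with respect to the action of S_n on the power set of {1,…,n}. Then either there exists δ ∈ Δ with |δ| ∈ {1, n−1}, or |Δ| ≤ n − 2. -/
open Pointwise

/-- The pointwise stabilizer in `G` of a set `Λ` of points of a `G`-set. -/
def pstab (G : Type*) {α : Type*} [Group G] [MulAction G α] (Λ : Set α) : Subgroup G :=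
  ⨅ a ∈ Λ, MulAction.stabilizer G a

lemma mem_pstab {G α : Type*} [Group G] [MulAction G α] {Λ : Set α} {g : G} :
    g ∈ pstab G Λ ↔ ∀ a ∈ Λ, g • a = a := by
  simp [pstab, Subgroup.mem_iInf, MulAction.mem_stabilizer_iff]

section comb

variable {n : ℕ}

/-- the coloring of points by their membership pattern in `Γ` -/
private def colors (Γ : Finset (Finset (Fin n))) : Finset (Finset (Finset (Fin n))) :=
  Finset.univ.image (fun x : Fin n => Γ.filter (fun δ => x ∈ δ))

private lemma colors_step (Δf Γ : Finset (Finset (Fin n))) (hΓ : Γ ⊆ Δf)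
    (δ : Finset (Fin n)) (hδΓ : δ ∉ Γ) (x y : Fin n) (hx : x ∈ δ) (hy : y ∉ δ)
    (hp : ∀ δ' ∈ Δf, δ' ≠ δ → (x ∈ δ' ↔ y ∈ δ')) :
    (colors Γ).card + 1 ≤ (colors (insert δ Γ)).card := by
  classical
  have herase : ∀ z : Fin n, ((insert δ Γ).filter (fun d => z ∈ d)).erase δ
      = Γ.filter (fun d => z ∈ d) := by
    intro z
    ext d
    simp only [Finset.mem_erase, Finset.mem_filter, Finset.mem_insert]
    constructor
    · rintro ⟨hne, hd | hd, hz⟩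
      · exact absurd hd hne
      · exact ⟨hd, hz⟩
    · rintro ⟨hd, hz⟩
      exact ⟨fun h => hδΓ (h ▸ hd), Or.inr hd, hz⟩
  have himg : (colors (insert δ Γ)).image (fun c => c.erase δ) = colors Γ := by
    unfold colors
    rw [Finset.image_image]
    exact Finset.image_congr (fun z _ => herase z)
  have hxmem : (insert δ Γ).filter (fun d => x ∈ d) ∈ colors (insert δ Γ) :=
    Finset.mem_image_of_mem _ (Finset.mem_univ x)
  have hymem : (insert δ Γ).filter (fun d => y ∈ d) ∈ colors (insert δ Γ) :=
    Finset.mem_image_of_mem _ (Finset.mem_univ y)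
  have hne : (insert δ Γ).filter (fun d => x ∈ d) ≠ (insert δ Γ).filter (fun d => y ∈ d) := by
    intro h
    have hδx : δ ∈ (insert δ Γ).filter (fun d => x ∈ d) :=
      Finset.mem_filter.mpr ⟨Finset.mem_insert_self _ _, hx⟩
    rw [h] at hδx
    exact hy (Finset.mem_filter.mp hδx).2
  have heq : ((insert δ Γ).filter (fun d => x ∈ d)).erase δ
      = ((insert δ Γ).filter (fun d => y ∈ d)).erase δ := by
    rw [herase, herase]
    ext d
    simp only [Finset.mem_filter]
    have key : ∀ hd : d ∈ Γ, (x ∈ d ↔ y ∈ d) :=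
      fun hd => hp d (hΓ hd) (fun hh => hδΓ (hh ▸ hd))
    constructor
    · rintro ⟨hd, hz⟩; exact ⟨hd, (key hd).mp hz⟩
    · rintro ⟨hd, hz⟩; exact ⟨hd, (key hd).mpr hz⟩
  by_contra hlt
  push_neg at hlt
  have h1 : (colors Γ).card ≤ (colors (insert δ Γ)).card := by
    rw [← himg]; exact Finset.card_image_le
  have h2 : ((colors (insert δ Γ)).image (fun c => c.erase δ)).card
      = (colors (insert δ Γ)).card := by
    rw [himg]; omega
  have hinj := Finset.card_image_iff.mp h2
  exact hne (hinj (Finset.mem_coe.mpr hxmem) (Finset.mem_coe.mpr hymem) heq)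

private lemma colors_chain (Δf : Finset (Finset (Fin n)))
    (hkey : ∀ δ ∈ Δf, ∃ x y, x ∈ δ ∧ y ∉ δ ∧ ∀ δ' ∈ Δf, δ' ≠ δ → (x ∈ δ' ↔ y ∈ δ')) :
    ∀ D : Finset (Finset (Fin n)), ∀ Δb : Finset (Finset (Fin n)), Δb ⊆ Δf → D ⊆ Δf →
      Disjoint D Δb → (colors Δb).card + D.card ≤ (colors (Δb ∪ D)).card := by
  classical
  intro D
  induction D using Finset.induction_on with
  | empty => intro Δb hb _ _; simp
  | @insert δ D hδD ih =>
    intro Δb hb hins hdisj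
    have hδf : δ ∈ Δf := hins (Finset.mem_insert_self _ _)
    have hDf : D ⊆ Δf := fun d hd => hins (Finset.mem_insert_of_mem hd)
    have hdisj' : Disjoint D Δb :=
      hdisj.mono_left (Finset.subset_insert _ _)
    have hδb : δ ∉ Δb := Finset.disjoint_left.mp hdisj (Finset.mem_insert_self _ _)
    obtain ⟨x, y, hx, hy, hp⟩ := hkey δ hδf
    have h1 := ih Δb hb hDf hdisj'
    have hδnot : δ ∉ Δb ∪ D := by
      rw [Finset.mem_union]; rintro (h | h); exacts [hδb h, hδD h]
    have h2 := colors_step Δf (Δb ∪ D) (Finset.union_subset hb hDf) δ hδnot x y hx hy hp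
    rw [Finset.union_insert]
    rw [Finset.card_insert_of_notMem hδD]
    omega

/-- laminar families of sets of size ≥ 2 inside `S` have at most `|S| - 1` members -/
private lemma laminar_bound {V : Type*} [DecidableEq V] :
    ∀ k : ℕ, ∀ F : Finset (Finset V), ∀ S : Finset V, F.card ≤ k →
      (∀ A ∈ F, A ⊆ S ∧ 2 ≤ A.card) →
      (∀ A ∈ F, ∀ B ∈ F, A ∩ B = ∅ ∨ A ⊆ B ∨ B ⊆ A) →
      F.card ≤ S.card - 1 := by
  intro k
  induction k with
  | zero => intro F S hk _ _; omega
  | succ k ih =>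
    intro F S hk hsub hlam
    rcases F.eq_empty_or_nonempty with rfl | hne
    · simp
    obtain ⟨A, hA, hmin⟩ := F.exists_min_image Finset.card hne
    have hA2 : 2 ≤ A.card := (hsub A hA).2
    have hAS : A ⊆ S := (hsub A hA).1
    obtain ⟨a, ha⟩ : A.Nonempty := Finset.card_pos.mp (by omega)
    set g : Finset V → Finset V := fun B => B \ A.erase a with hg
    have hcases : ∀ B ∈ F.erase A, A ∩ B = ∅ ∨ A ⊆ B := by
      intro B hB
      have hBF := Finset.mem_of_mem_erase hB
      have hBA : B ≠ A := Finset.ne_of_mem_erase hB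
      rcases hlam A hA B hBF with h | h | h
      · exact Or.inl h
      · exact Or.inr h
      · exact absurd (Finset.eq_of_subset_of_card_le h (hmin B hBF)) hBA
    -- recovery and injectivity
    have hrec : ∀ B ∈ F.erase A, (if a ∈ g B then g B ∪ A.erase a else g B) = B := by
      intro B hB
      rcases hcases B hB with h | h
      · have hdisjAB : Disjoint B A := by
          rw [Finset.disjoint_iff_inter_eq_empty, Finset.inter_comm]; exact h
        have hgB : g B = B := Finset.sdiff_eq_self_iff_disjoint.mpr
          (hdisjAB.mono_right (Finset.erase_subset _ _))
        have haB : a ∉ B := Finset.disjoint_left.mp hdisjAB.symm ha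
        rw [hgB, if_neg haB]
      · have hsubB : A.erase a ⊆ B := (Finset.erase_subset _ _).trans h
        have haB : a ∈ B := h ha
        have hagB : a ∈ g B := Finset.mem_sdiff.mpr ⟨haB, Finset.notMem_erase _ _⟩
        rw [if_pos hagB, hg]
        exact Finset.sdiff_union_of_subset hsubB
    have hinj : Set.InjOn g (F.erase A) := by
      intro B hB C hC hBC
      have := hrec B (Finset.mem_coe.mp hB)
      rw [← this, hBC, hrec C (Finset.mem_coe.mp hC)]
    set F' := (F.erase A).image g with hF'
    have hcardF' : F'.card = F.card - 1 := by
      rw [hF', Finset.card_image_of_injOn hinj, Finset.card_erase_of_mem hA]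
    set S' := S \ A.erase a with hS'
    have haS' : a ∈ S' := Finset.mem_sdiff.mpr ⟨hAS ha, Finset.notMem_erase _ _⟩
    have hcardS' : S'.card = S.card - (A.card - 1) := by
      rw [hS', Finset.card_sdiff_of_subset ((Finset.erase_subset _ _).trans hAS),
        Finset.card_erase_of_mem ha]
    -- hypotheses for F'
    have hsub' : ∀ A' ∈ F', A' ⊆ S' ∧ 2 ≤ A'.card := by
      intro A' hA'
      obtain ⟨B, hB, rfl⟩ := Finset.mem_image.mp hA'
      have hBF := Finset.mem_of_mem_erase hB
      constructor
      · exact Finset.sdiff_subset_sdiff (hsub B hBF).1 (le_refl _)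
      · rcases hcases B hB with h | h
        · have hdisjAB : Disjoint B A := by
            rw [Finset.disjoint_iff_inter_eq_empty, Finset.inter_comm]; exact h
          have hgB : g B = B := Finset.sdiff_eq_self_iff_disjoint.mpr
            (hdisjAB.mono_right (Finset.erase_subset _ _))
          rw [hgB]; exact (hsub B hBF).2
        · have hsubB : A.erase a ⊆ B := (Finset.erase_subset _ _).trans h
          have hlt : A.card < B.card := Finset.card_lt_card
            (Finset.ssubset_iff_subset_ne.mpr ⟨h, fun hh => (Finset.ne_of_mem_erase hB) hh.symm⟩)
          have : (g B).card = B.card - (A.card - 1) := by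
            rw [hg, Finset.card_sdiff_of_subset hsubB, Finset.card_erase_of_mem ha]
          omega
    have hlam' : ∀ A' ∈ F', ∀ B' ∈ F', A' ∩ B' = ∅ ∨ A' ⊆ B' ∨ B' ⊆ A' := by
      intro A' hA' B' hB'
      obtain ⟨B, hB, rfl⟩ := Finset.mem_image.mp hA'
      obtain ⟨C, hC, rfl⟩ := Finset.mem_image.mp hB'
      rcases hlam B (Finset.mem_of_mem_erase hB) C (Finset.mem_of_mem_erase hC) with h | h | h
      · left
        rw [← Finset.subset_empty]
        intro z hz
        rw [Finset.mem_inter] at hz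
        have : z ∈ B ∩ C := Finset.mem_inter.mpr
          ⟨(Finset.mem_sdiff.mp hz.1).1, (Finset.mem_sdiff.mp hz.2).1⟩
        rw [h] at this; exact this
      · exact Or.inr (Or.inl (Finset.sdiff_subset_sdiff h (le_refl _)))
      · exact Or.inr (Or.inr (Finset.sdiff_subset_sdiff h (le_refl _)))
    have hF'k : F'.card ≤ k := by omega
    have hmain := ih F' S' hF'k hsub' hlam'
    have hS'pos : 1 ≤ S'.card := Finset.card_pos.mpr ⟨a, haS'⟩
    have hScard : A.card ≤ S.card := Finset.card_le_card hAS
    omega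

variable {n : ℕ}

/-- membership-level cross-freeness -/
private def CF (δ δ' : Finset (Fin n)) : Prop :=
  (∀ z, ¬(z ∈ δ ∧ z ∈ δ')) ∨ (∀ z, z ∈ δ → z ∈ δ') ∨ (∀ z, z ∈ δ' → z ∈ δ) ∨
    (∀ z : Fin n, z ∈ δ ∨ z ∈ δ')

private lemma CF.compl_left {δ δ' : Finset (Fin n)} (h : CF δ δ') : CF δᶜ δ' := by
  rcases h with h | h | h | h
  · exact Or.inr (Or.inr (Or.inl (fun z hz => Finset.mem_compl.mpr (fun hc => h z ⟨hc, hz⟩))))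
  · refine Or.inr (Or.inr (Or.inr (fun z => ?_)))
    by_cases hz : z ∈ δ
    · exact Or.inr (h z hz)
    · exact Or.inl (Finset.mem_compl.mpr hz)
  · exact Or.inl (fun z hz => (Finset.mem_compl.mp hz.1) (h z hz.2))
  · refine Or.inr (Or.inl (fun z hz => ?_))
    rcases h z with hh | hh
    · exact absurd hh (Finset.mem_compl.mp hz)
    · exact hh

private lemma CF.symm {δ δ' : Finset (Fin n)} (h : CF δ δ') : CF δ' δ := by
  rcases h with h | h | h | h
  · exact Or.inl (fun z hz => h z ⟨hz.2, hz.1⟩)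
  · exact Or.inr (Or.inr (Or.inl h))
  · exact Or.inr (Or.inl h)
  · exact Or.inr (Or.inr (Or.inr (fun z => (h z).symm)))


private theorem main_comb (hn : 2 ≤ n) (Δf : Finset (Finset (Fin n)))
    (hkey : ∀ δ ∈ Δf, ∃ x y, x ∈ δ ∧ y ∉ δ ∧ ∀ δ' ∈ Δf, δ' ≠ δ → (x ∈ δ' ↔ y ∈ δ'))
    (hsz : ∀ δ ∈ Δf, δ.card ≠ 1 ∧ δ.card ≠ n - 1) :
    Δf.card ≤ n - 2 := by
  classical
  by_contra hc
  have hcard : n - 1 ≤ Δf.card := by omega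
  -- sizes in [2, n-2]
  have hsz2 : ∀ δ ∈ Δf, 2 ≤ δ.card ∧ δ.card ≤ n - 2 := by
    intro δ hδ
    obtain ⟨x, y, hx, hy, -⟩ := hkey δ hδ
    have h1 : 0 < δ.card := Finset.card_pos.mpr ⟨x, hx⟩
    have h2 : δ.card < n := by
      have hne : δ ≠ Finset.univ := fun h => hy (h ▸ Finset.mem_univ y)
      have := Finset.card_lt_card (Finset.ssubset_iff_subset_ne.mpr
        ⟨Finset.subset_univ δ, hne⟩)
      simpa [Finset.card_univ] using this
    obtain ⟨e1, e2⟩ := hsz δ hδ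
    omega
  -- complements are not both in the family
  have hcompl : ∀ δ ∈ Δf, δᶜ ∉ Δf := by
    intro δ hδ hcδ
    obtain ⟨x, y, hx, hy, hp⟩ := hkey δ hδ
    have hne : δᶜ ≠ δ := by
      intro h
      exact hy (h ▸ Finset.mem_compl.mpr hy)
    have := hp δᶜ hcδ hne
    simp [Finset.mem_compl, hx, hy] at this
  -- cross-freeness of every pair
  have hcf : ∀ δ ∈ Δf, ∀ δ' ∈ Δf, δ ≠ δ' → CF δ δ' := by
    intro δ hδ δ' hδ' hne
    by_contra hCF
    unfold CF at hCF
    push_neg at hCF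
    obtain ⟨⟨z1, hz1⟩, h2, h3, ⟨z4, hz4d, hz4d'⟩⟩ := hCF
    obtain ⟨z2, hz2d, hz2d'⟩ := h2
    obtain ⟨z3, hz3d', hz3d⟩ := h3
    -- the colors of the pair family
    set Δb : Finset (Finset (Fin n)) := {δ, δ'} with hΔb
    have hbsub : Δb ⊆ Δf := by
      intro d hd
      rcases Finset.mem_insert.mp hd with rfl | hd
      · exact hδ
      · rw [Finset.mem_singleton.mp hd]; exact hδ'
    have hbcard : Δb.card = 2 := by
      rw [hΔb, Finset.card_insert_of_notMem (by simpa using hne), Finset.card_singleton]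
    have hchain := colors_chain Δf hkey (Δf \ Δb) Δb hbsub (Finset.sdiff_subset)
      Finset.sdiff_disjoint
    rw [Finset.union_sdiff_of_subset hbsub] at hchain
    have hub : (colors Δf).card ≤ n := by
      calc (colors Δf).card ≤ Finset.univ.card := Finset.card_image_le
      _ = n := by simp
    have hDcard : (Δf \ Δb).card = Δf.card - 2 := by
      rw [Finset.card_sdiff_of_subset hbsub, hbcard]
    have hb3 : (colors Δb).card ≤ 3 := by omega
    -- four distinct colors
    set c : Fin n → Finset (Finset (Fin n)) := fun z => Δb.filter (fun d => z ∈ d) with hcdef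
    have hmemc : ∀ z, c z ∈ colors Δb := fun z => Finset.mem_image_of_mem _ (Finset.mem_univ z)
    have hdet : ∀ z, (δ ∈ c z ↔ z ∈ δ) ∧ (δ' ∈ c z ↔ z ∈ δ') := by
      intro z
      constructor
      · simp [hcdef, hΔb]
      · simp [hcdef, hΔb]
    have hne12 : c z1 ≠ c z2 := fun h =>
      hz2d' (((hdet z2).2).mp (h ▸ ((hdet z1).2).mpr hz1.2))
    have hne13 : c z1 ≠ c z3 := fun h =>
      hz3d (((hdet z3).1).mp (h ▸ ((hdet z1).1).mpr hz1.1))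
    have hne14 : c z1 ≠ c z4 := fun h =>
      hz4d (((hdet z4).1).mp (h ▸ ((hdet z1).1).mpr hz1.1))
    have hne23 : c z2 ≠ c z3 := fun h =>
      hz3d (((hdet z3).1).mp (h ▸ ((hdet z2).1).mpr hz2d))
    have hne24 : c z2 ≠ c z4 := fun h =>
      hz4d (((hdet z4).1).mp (h ▸ ((hdet z2).1).mpr hz2d))
    have hne34 : c z3 ≠ c z4 := fun h =>
      hz4d' (((hdet z4).2).mp (h ▸ ((hdet z3).2).mpr hz3d'))
    have hsub4 : ({c z1, c z2, c z3, c z4} : Finset (Finset (Finset (Fin n)))) ⊆ colors Δb := by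
      intro d hd
      simp only [Finset.mem_insert, Finset.mem_singleton] at hd
      rcases hd with rfl | rfl | rfl | rfl <;> exact hmemc _
    have hcard4 : ({c z1, c z2, c z3, c z4} : Finset (Finset (Finset (Fin n)))).card = 4 := by
      rw [Finset.card_insert_of_notMem (by simp [hne12, hne13, hne14]),
        Finset.card_insert_of_notMem (by simp [hne23, hne24]),
        Finset.card_insert_of_notMem (by simp [hne34]), Finset.card_singleton]
    have := Finset.card_le_card hsub4
    omega
  -- build the laminar family
  have h0n : 0 < n := by omega
  set x0 : Fin n := ⟨0, h0n⟩ with hx0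
  set f : Finset (Fin n) → Finset (Fin n) := fun δ => if x0 ∈ δ then δᶜ else δ with hf
  have hfx0 : ∀ δ, x0 ∉ f δ := by
    intro δ
    rw [hf]
    by_cases h : x0 ∈ δ
    · simp [h]
    · simp [h]
  have hinj : Set.InjOn f Δf := by
    intro δ hδ δ' hδ' heq
    have hδf := Finset.mem_coe.mp hδ
    have hδ'f := Finset.mem_coe.mp hδ'
    rw [hf] at heq
    by_cases h1 : x0 ∈ δ <;> by_cases h2 : x0 ∈ δ' <;> simp only [h1, h2, if_pos, if_neg,
      if_true, if_false] at heq
    · exact compl_injective heq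
    · exact absurd (by rw [heq]; exact hδ'f) (hcompl δ hδf)
    · exact absurd (by rw [← heq]; exact hδf) (hcompl δ' hδ'f)
    · exact heq
  set F : Finset (Finset (Fin n)) := Δf.image f with hF
  have hcardF : F.card = Δf.card := Finset.card_image_of_injOn hinj
  set S : Finset (Fin n) := Finset.univ.erase x0 with hS
  have hcardS : S.card = n - 1 := by
    rw [hS, Finset.card_erase_of_mem (Finset.mem_univ _), Finset.card_univ, Fintype.card_fin]
  have hsubF : ∀ A ∈ F, A ⊆ S ∧ 2 ≤ A.card := by
    intro A hA
    obtain ⟨δ, hδ, rfl⟩ := Finset.mem_image.mp hA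
    constructor
    · intro z hz
      refine Finset.mem_erase.mpr ⟨fun h => hfx0 δ (h ▸ hz), Finset.mem_univ z⟩
    · obtain ⟨hg2, hgn⟩ := hsz2 δ hδ
      rw [hf]
      by_cases h : x0 ∈ δ
      · simp only [h, if_true]
        rw [Finset.card_compl, Fintype.card_fin]
        omega
      · simpa [h] using hg2
  have hlamF : ∀ A ∈ F, ∀ B ∈ F, A ∩ B = ∅ ∨ A ⊆ B ∨ B ⊆ A := by
    intro A hA B hB
    obtain ⟨δ, hδ, rfl⟩ := Finset.mem_image.mp hA
    obtain ⟨δ', hδ', rfl⟩ := Finset.mem_image.mp hB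
    by_cases hee : δ = δ'
    · subst hee; exact Or.inr (Or.inl (le_refl _))
    have hCF : CF δ δ' := hcf δ hδ δ' hδ' hee
    have hCF2 : CF (f δ) (f δ') := by
      rw [hf]
      by_cases h1 : x0 ∈ δ <;> by_cases h2 : x0 ∈ δ' <;>
        simp only [h1, h2, if_true, if_false, if_pos, if_neg]
      · exact (hCF.compl_left).symm.compl_left.symm
      · exact hCF.compl_left
      · exact (hCF.symm.compl_left).symm
      · exact hCF
    rcases hCF2 with h | h | h | h
    · exact Or.inl (Finset.eq_empty_iff_forall_notMem.mpr
        (fun z hz => h z (Finset.mem_inter.mp hz)))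
    · exact Or.inr (Or.inl (fun z hz => h z hz))
    · exact Or.inr (Or.inr (fun z hz => h z hz))
    · rcases h x0 with hh | hh
      · exact absurd hh (hfx0 δ)
      · exact absurd hh (hfx0 δ')
  have := laminar_bound F.card F S (le_refl _) hsubF hlamF
  omega

end comb


/-- Lemma 2.5: if `n ≥ 2` and `Δ` is a set of subsets of `{1,…,n}` that is independent
for the action of `Sₙ` on the power set, then either some `δ ∈ Δ` has size `1` or `n-1`,
or `|Δ| ≤ n - 2`. -/
theorem independent_subsets_bound {n : ℕ} (hn : 2 ≤ n) (Δ : Set (Finset (Fin n)))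
    (hind : ∀ Δ' : Set (Finset (Fin n)), Δ' ⊂ Δ →
      pstab (Equiv.Perm (Fin n)) Δ' ≠ pstab (Equiv.Perm (Fin n)) Δ) :
    (∃ δ ∈ Δ, δ.card = 1 ∨ δ.card = n - 1) ∨ Δ.ncard ≤ n - 2 := by
  classical
  by_cases hex : ∃ δ ∈ Δ, δ.card = 1 ∨ δ.card = n - 1
  · exact Or.inl hex
  right
  push_neg at hex
  have hfin : Δ.Finite := Set.toFinite Δ
  set Δf : Finset (Finset (Fin n)) := hfin.toFinset with hΔf
  have hmem : ∀ δ, δ ∈ Δf ↔ δ ∈ Δ := fun δ => Set.Finite.mem_toFinset hfin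
  have hkey : ∀ δ ∈ Δf, ∃ x y, x ∈ δ ∧ y ∉ δ ∧ ∀ δ' ∈ Δf, δ' ≠ δ → (x ∈ δ' ↔ y ∈ δ') := by
    intro δ hδf
    have hδ : δ ∈ Δ := (hmem δ).mp hδf
    have hss : Δ \ {δ} ⊂ Δ := Set.sdiff_singleton_ssubset.mpr hδ
    have hne := hind (Δ \ {δ}) hss
    have hle : pstab (Equiv.Perm (Fin n)) Δ ≤ pstab (Equiv.Perm (Fin n)) (Δ \ {δ}) := by
      intro g hg
      rw [mem_pstab] at hg ⊢
      exact fun a ha => hg a ha.1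
    obtain ⟨g, hg', hgΔ⟩ : ∃ g, g ∈ pstab (Equiv.Perm (Fin n)) (Δ \ {δ}) ∧
        g ∉ pstab (Equiv.Perm (Fin n)) Δ := by
      by_contra h
      push_neg at h
      exact hne (le_antisymm (fun g hg => h g hg) hle)
    rw [mem_pstab] at hg' hgΔ
    push_neg at hgΔ
    obtain ⟨δ₁, hδ₁, hmv⟩ := hgΔ
    have hδ₁δ : δ₁ = δ := by
      by_contra hc
      exact hmv (hg' δ₁ ⟨hδ₁, fun h => hc (Set.mem_singleton_iff.mp h)⟩)
    subst hδ₁δ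
    -- there is a point moved across δ₁
    have hxex : ∃ x : Fin n, ¬(x ∈ δ₁ ↔ g x ∈ δ₁) := by
      by_contra hc
      push_neg at hc
      apply hmv
      ext z
      constructor
      · intro hz
        obtain ⟨w, hw, hwz⟩ := Finset.mem_smul_finset.mp hz
        rw [Equiv.Perm.smul_def] at hwz
        exact hwz ▸ (hc w).mp hw
      · intro hz
        have h1 : g⁻¹ z ∈ δ₁ := by
          have := hc (g⁻¹ z)
          simp only [Equiv.Perm.inv_def, Equiv.apply_symm_apply] at this
          exact this.mpr hz
        have : g • (g⁻¹ z) ∈ g • δ₁ := Finset.smul_mem_smul_finset h1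
        simpa [Equiv.Perm.smul_def] using this
    obtain ⟨x, hx⟩ := hxex
    have hpriv : ∀ δ' ∈ Δf, δ' ≠ δ₁ → (x ∈ δ' ↔ g x ∈ δ') := by
      intro δ' hδ'f hδ'ne
      have hfix : g • δ' = δ' := hg' δ' ⟨(hmem δ').mp hδ'f,
        fun h => hδ'ne (Set.mem_singleton_iff.mp h)⟩
      constructor
      · intro hxin
        have : g • x ∈ g • δ' := Finset.smul_mem_smul_finset hxin
        rw [hfix, Equiv.Perm.smul_def] at this
        exact this
      · intro hgin
        have : g • x ∈ g • δ' := by rw [hfix, Equiv.Perm.smul_def]; exact hgin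
        exact (Finset.smul_mem_smul_finset_iff g).mp this
    by_cases hxδ : x ∈ δ₁
    · refine ⟨x, g x, hxδ, fun h => hx ⟨fun _ => h, fun _ => hxδ⟩, ?_⟩
      intro δ' hδ' hδ'ne
      exact hpriv δ' hδ' hδ'ne
    · have hgxδ : g x ∈ δ₁ := by
        by_contra hc
        exact hx ⟨fun h => absurd h hxδ, fun h => absurd h hc⟩
      refine ⟨g x, x, hgxδ, hxδ, ?_⟩
      intro δ' hδ' hδ'ne
      exact (hpriv δ' hδ' hδ'ne).symm
  have hsz : ∀ δ ∈ Δf, δ.card ≠ 1 ∧ δ.card ≠ n - 1 := by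
    intro δ hδf
    exact hex δ ((hmem δ).mp hδf)
  have hmain := main_comb hn Δf hkey hsz
  rwa [Set.ncard_eq_toFinset_card Δ hfin]
end
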